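/- In any semigroup with ACC on right congruences, for each element c there exists n with ann(cⁿ) = ann(c^{2n}), and then the Rees congruence of the right ideal cⁿS intersects ann(cⁿ) trivially. -/
import Mathlib


universe u

/-- A right action of a semigroup `S` on a set `A`. -/
def IsRightAct (S : Type u) [Semigroup S] {A : Type u} (act : A → S → A) : Prop :=
  ∀ (a : A) (s t : S), act a (s * t) = act (act a s) t

/-- An `S`-homomorphism between right `S`-acts. -/
def IsActHom {S : Type u} [Semigroup S] {A B : Type u} (actA : A → S → A)
    (actB : B → S → B) (f : A → B) : Prop :=
  ∀ (a : A) (s : S), f (actA a s) = actB (f a) s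

/-- A zero element of a right `S`-act. -/
def IsZeroElem {S : Type u} [Semigroup S] {A : Type u} (act : A → S → A) (θ : A) : Prop :=
  ∀ s : S, act θ s = θ

/-- A subact of a right `S`-act. -/
def IsSubact {S : Type u} [Semigroup S] {A : Type u} (act : A → S → A) (B : Set A) : Prop :=
  B.Nonempty ∧ ∀ b ∈ B, ∀ s : S, act b s ∈ B

/-- `B` is large in `A`: every `S`-homomorphism from `A` injective on `B` is injective. -/
def LargeIn {S : Type u} [Semigroup S] {A : Type u} (act : A → S → A) (B : Set A) : Prop :=
  ∀ (C : Type u) (actC : C → S → C), IsRightAct S actC →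
    ∀ f : A → C, IsActHom act actC f → Set.InjOn f B → Function.Injective f

/-- A right `S`-act is uniform if every nonzero subact is large. -/
def UniformAct {S : Type u} [Semigroup S] {A : Type u} (act : A → S → A) : Prop :=
  ∀ B : Set A, IsSubact act B → (∃ b ∈ B, ¬ IsZeroElem act b) → LargeIn act B

/-- A semigroup is right uniform if `S` as a right `S`-act over itself is uniform. -/
def RightUniform (S : Type u) [Semigroup S] : Prop :=
  UniformAct (fun (a : S) (s : S) => a * s)

/-- A right congruence on a semigroup. -/
def IsRightCongruence {S : Type u} [Semigroup S] (r : S → S → Prop) : Prop :=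
  Equivalence r ∧ ∀ a b : S, r a b → ∀ s : S, r (a * s) (b * s)

/-- Ascending chain condition on right congruences. -/
def ACCRightCongruences (S : Type u) [Semigroup S] : Prop :=
  ∀ f : ℕ → (S → S → Prop), (∀ n, IsRightCongruence (f n)) →
    (∀ n, ∀ a b : S, f n a b → f (n + 1) a b) →
    ∃ N : ℕ, ∀ n : ℕ, N ≤ n → f n = f N

/-- `spow c n` is the power `c ^ (n + 1)` in a semigroup. -/
def spow {S : Type u} [Semigroup S] (c : S) : ℕ → S
  | 0 => c
  | n + 1 => spow c n * c

/-- An element is left nilpotent if some power of it is a left zero. -/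
def IsLeftNilpotent {S : Type u} [Semigroup S] (c : S) : Prop :=
  ∃ n : ℕ, ∀ s : S, spow c n * s = spow c n

/-- The right congruence annihilator of an element. -/
def annRel {S : Type u} [Semigroup S] (c : S) : S → S → Prop :=
  fun s t => c * s = c * t


lemma spow_succ' {S : Type u} [Semigroup S] (c : S) (n : ℕ) :
    spow c (n + 1) = c * spow c n := by
  induction n with
  | zero => rfl
  | succ k ih =>
      show spow c (k+1) * c = c * spow c (k+1)
      rw [ih, mul_assoc]
      exact congrArg (c * ·) ih

lemma spow_add {S : Type u} [Semigroup S] (c : S) (n m : ℕ) :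
    spow c n * spow c m = spow c (n + m + 1) := by
  induction m with
  | zero => rfl
  | succ k ih =>
      show spow c n * (spow c k * c) = _
      rw [← mul_assoc, ih]
      rfl

theorem stmt16 {S : Type u} [Semigroup S] (hacc : ACCRightCongruences S) (c : S) :
    ∃ n : ℕ, annRel (spow c n) = annRel (spow c (2 * n + 1)) ∧
      ∀ a b : S,
        ((a ∈ Set.range (fun s : S => spow c n * s) ∧
          b ∈ Set.range (fun s : S => spow c n * s)) ∨ a = b) →
        annRel (spow c n) a b → a = b := by
  obtain ⟨N, hN⟩ := hacc (fun k => annRel (spow c k))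
    (fun k => ⟨⟨fun a => rfl, fun h => h.symm, fun h1 h2 => h1.trans h2⟩,
      fun a b h s => by
        show spow c k * (a * s) = spow c k * (b * s)
        rw [← mul_assoc, ← mul_assoc, h]⟩)
    (fun k a b h => by
      show spow c (k + 1) * a = spow c (k + 1) * b
      rw [spow_succ', mul_assoc, mul_assoc, h])
  refine ⟨N, (hN (2 * N + 1) (by omega)).symm, ?_⟩
  rintro a b (⟨⟨s, rfl⟩, ⟨t, rfl⟩⟩ | rfl) h
  · simp only at h ⊢
    have h2 : annRel (spow c (2 * N + 1)) s t := by
      show spow c (2 * N + 1) * s = spow c (2 * N + 1) * t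
      have e : N + N + 1 = 2 * N + 1 := by omega
      rw [← e, ← spow_add, mul_assoc, mul_assoc]
      exact h
    have := (hN (2 * N + 1) (by omega)) ▸ h2
    exact this
  · rfl
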